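/- Special case of Proposition 2 (equal impairment levels): Let N ≥ 1, let X_1, …, X_N be independent rate-1 exponential random variables, let γ̃ > 0 and c > 0, and define the SNDR γ = (γ̃ ∑_{i=1}^N X_i)/(γ̃ c ∑_{i=1}^N X_i + 1). Then E[log₂(1 + γ)] ≤ log₂(1 + N/(N·c + 1/γ̃)). -/

import Mathlib

open MeasureTheory ProbabilityTheory Finset Real
open scoped NNReal ENNReal

lemma tangent_aux (g c n s : ℝ) (hg : 0 < g) (hc : 0 < c) (hn : 0 ≤ n) (hs : 0 ≤ s) :
    Real.logb 2 (1 + g*s/(g*c*s+1)) ≤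
      Real.logb 2 (1 + g*n/(g*c*n+1)) +
        g/((g*c*n+1)^2*(1+g*n/(g*c*n+1))*Real.log 2)*(s-n) := by
  have hu0 : 0 < g*c*s+1 := by positivity
  have hv0 : 0 < g*c*n+1 := by positivity
  set u := g*c*s+1 with hu
  set v := g*c*n+1 with hv
  set A := 1 + g*n/v with hA'
  set B := 1 + g*s/u with hB'
  have hA : 1 ≤ A := le_add_of_nonneg_right (by positivity)
  have hB : 1 ≤ B := le_add_of_nonneg_right (by positivity)
  have huv : u - v = g*c*(s-n) := by rw [hu, hv]; ring
  have hnum : g*s*v - g*n*u = g*(s-n) := by rw [hu, hv]; ring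
  clear_value u v A B
  have hA0 : 0 < A := by linarith
  have hB0 : 0 < B := by linarith
  have hlog2 : 0 < Real.log 2 := Real.log_pos one_lt_two
  have key1 : Real.log B - Real.log A ≤ (B - A)/A := by
    have h := Real.log_le_sub_one_of_pos (show 0 < B/A by positivity)
    rw [Real.log_div hB0.ne' hA0.ne'] at h
    have h2 : B/A - 1 = (B-A)/A := by field_simp
    linarith
  have key2 : B - A ≤ g*(s-n)/v^2 := by
    have hBA : B - A = g*(s-n)/(u*v) := by
      rw [hB', hA', ← hnum]
      field_simp
      ring
    rw [hBA, div_le_div_iff₀ (by positivity) (by positivity)]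
    have h3 : g*(s-n)*(u*v) - g*(s-n)*v^2 = g*(s-n)*v*(u-v) := by ring
    rw [huv] at h3
    have h4 : g*(s-n)*v*(g*c*(s-n)) = g^2*c*v*(s-n)^2 := by ring
    have h5 : 0 ≤ g^2*c*v*(s-n)^2 := by positivity
    linarith
  have step1 : Real.logb 2 B - Real.logb 2 A ≤ ((B - A)/A)/Real.log 2 := by
    rw [Real.logb, Real.logb, ← sub_div]
    gcongr
  have step2 : ((B-A)/A)/Real.log 2 ≤ g/(v^2*A*Real.log 2)*(s-n) := by
    rw [show g/(v^2*A*Real.log 2)*(s-n) = ((g*(s-n)/v^2)/A)/Real.log 2 by ring]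
    gcongr
  linarith


lemma expPDFReal_eq (x : ℝ) :
    gammaPDFReal 1 1 x = Set.indicator (Set.Ici 0) (fun x => rexp (-x)) x := by
  rw [gammaPDFReal]
  by_cases hx : 0 ≤ x
  · simp [hx, Set.indicator_of_mem (Set.mem_Ici.2 hx), Real.Gamma_one, Real.rpow_zero]
  · simp [hx, Set.indicator_of_notMem (fun h => hx (Set.mem_Ici.1 h))]

lemma expMeasure_one_eq :
    expMeasure 1 = volume.withDensity
      (fun x => ((Real.toNNReal (gammaPDFReal 1 1 x) : ℝ≥0) : ℝ≥0∞)) := rfl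

lemma expMeasure_ae_nonneg : ∀ᵐ x ∂(expMeasure 1), 0 ≤ x := by
  rw [ae_iff]
  have hset : {x : ℝ | ¬ 0 ≤ x} = Set.Iio 0 := by ext x; simp [not_le]
  rw [hset]
  show expMeasure 1 (Set.Iio 0) = 0
  rw [expMeasure, gammaMeasure, withDensity_apply _ measurableSet_Iio]
  exact lintegral_gammaPDF_of_nonpos le_rfl

lemma smul_eq_indicator (x : ℝ) :
    (Real.toNNReal (gammaPDFReal 1 1 x) : ℝ≥0) • x
      = Set.indicator (Set.Ici 0) (fun x => rexp (-x) * x) x := by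
  rw [NNReal.smul_def, Real.coe_toNNReal _ (gammaPDFReal_nonneg zero_lt_one zero_lt_one x),
    expPDFReal_eq]
  by_cases hx : x ∈ Set.Ici 0 <;> simp [Set.indicator_of_mem, Set.indicator_of_notMem, hx]

lemma integrableOn_aux : IntegrableOn (fun x => rexp (-x) * x) (Set.Ici 0) := by
  rw [integrableOn_Ici_iff_integrableOn_Ioi]
  have h := Real.GammaIntegral_convergent (s := 2) (by norm_num)
  refine h.congr_fun (fun x hx => ?_) measurableSet_Ioi
  simp only [show (2:ℝ) - 1 = 1 by norm_num, Real.rpow_one]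

lemma integrable_id_expMeasure : Integrable (fun x : ℝ => x) (expMeasure 1) := by
  rw [expMeasure_one_eq, integrable_withDensity_iff_integrable_smul
    (by measurability : Measurable fun x => Real.toNNReal (gammaPDFReal 1 1 x))]
  refine (integrable_indicator_iff measurableSet_Ici).2 integrableOn_aux |>.congr ?_
  exact Filter.Eventually.of_forall fun x => (smul_eq_indicator x).symm

lemma integral_id_expMeasure : ∫ x, x ∂(expMeasure 1) = 1 := by
  rw [expMeasure_one_eq, integral_withDensity_eq_integral_smul
    (by measurability : Measurable fun x => Real.toNNReal (gammaPDFReal 1 1 x))]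
  calc ∫ x, (Real.toNNReal (gammaPDFReal 1 1 x) : ℝ≥0) • x
      = ∫ x, Set.indicator (Set.Ici 0) (fun x => rexp (-x) * x) x := by
        exact integral_congr_ae (Filter.Eventually.of_forall smul_eq_indicator)
    _ = ∫ x in Set.Ici 0, rexp (-x) * x := integral_indicator measurableSet_Ici
    _ = ∫ x in Set.Ioi 0, rexp (-x) * x := integral_Ici_eq_integral_Ioi
    _ = Real.Gamma 2 := by
        rw [Real.Gamma_eq_integral (by norm_num : (0:ℝ) < 2)]
        refine setIntegral_congr_fun measurableSet_Ioi (fun x hx => ?_)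
        rw [show (2:ℝ) - 1 = 1 by norm_num, Real.rpow_one]
    _ = 1 := by
        rw [show (2:ℝ) = (1:ℕ) + 1 by norm_num, Real.Gamma_nat_eq_factorial]
        simp

theorem ergodic_capacity_upper_bound_equal_impairments
    {Ω : Type*} [MeasurableSpace Ω] (μ : Measure Ω) [IsProbabilityMeasure μ]
    (N : ℕ) (hN : 1 ≤ N)
    (X : Fin N → Ω → ℝ) (hXmeas : ∀ i, Measurable (X i))
    (hXindep : iIndepFun X μ)
    (hXexp : ∀ i, Measure.map (X i) μ = expMeasure 1)
    (γSNR : ℝ) (hγSNR : 0 < γSNR) (c : ℝ) (hc : 0 < c)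
    (γ : Ω → ℝ)
    (hγ : ∀ ω, γ ω = (γSNR * ∑ i, X i ω) / (γSNR * c * ∑ i, X i ω + 1)) :
    ∫ ω, Real.logb 2 (1 + γ ω) ∂μ ≤
      Real.logb 2 (1 + N / (N * c + 1 / γSNR)) := by
  have hXint : ∀ i, Integrable (X i) μ := by
    intro i
    have h1 : Integrable (fun x : ℝ => x) (Measure.map (X i) μ) := by
      rw [hXexp i]; exact integrable_id_expMeasure
    exact (integrable_map_measure aestronglyMeasurable_id (hXmeas i).aemeasurable).1 h1
  have hXmean : ∀ i, ∫ ω, X i ω ∂μ = 1 := by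
    intro i
    have h := integral_map (hXmeas i).aemeasurable
      (aestronglyMeasurable_id (α := ℝ) (μ := Measure.map (X i) μ))
    rw [hXexp i] at h
    rw [show (∫ ω, X i ω ∂μ) = ∫ ω, id (X i ω) ∂μ from rfl, ← h]
    exact integral_id_expMeasure
  have hX0 : ∀ i, ∀ᵐ ω ∂μ, 0 ≤ X i ω := by
    intro i
    have h := expMeasure_ae_nonneg
    rw [← hXexp i] at h
    exact (ae_map_iff (hXmeas i).aemeasurable measurableSet_Ici).1 h
  set S : Ω → ℝ := fun ω => ∑ i, X i ω with hS
  have hSmeas : Measurable S := Finset.measurable_sum univ (fun i _ => hXmeas i)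
  have hSint : Integrable S μ := integrable_finset_sum univ (fun i _ => hXint i)
  have hSmean : ∫ ω, S ω ∂μ = N := by
    rw [show (∫ ω, S ω ∂μ) = ∫ ω, ∑ i, X i ω ∂μ from rfl,
      integral_finset_sum univ (fun i _ => hXint i)]
    simp [hXmean]
  have hS0 : ∀ᵐ ω ∂μ, 0 ≤ S ω := by
    filter_upwards [ae_all_iff.2 hX0] with ω h
    exact Finset.sum_nonneg fun i _ => h i
  set v : ℝ := γSNR*c*N+1 with hv
  have hv0 : 0 < v := by positivity
  set C1 : ℝ := Real.logb 2 (1 + γSNR*N/v) with hC1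
  set C2 : ℝ := γSNR/(v^2*(1+γSNR*N/v)*Real.log 2) with hC2
  have hptwise : ∀ᵐ ω ∂μ, Real.logb 2 (1 + γ ω) ≤ C1 + C2*(S ω - N) := by
    filter_upwards [hS0] with ω h
    rw [hγ ω]
    exact tangent_aux γSNR c N (S ω) hγSNR hc (Nat.cast_nonneg N) h
  have hγmeas : Measurable fun ω => Real.logb 2 (1 + γ ω) := by
    have heq : (fun ω => Real.logb 2 (1 + γ ω))
        = fun ω => Real.log (1 + (γSNR * S ω)/(γSNR*c*S ω+1)) / Real.log 2 := by
      funext ω; rw [hγ ω]; rfl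
    rw [heq]
    exact ((((measurable_const.mul hSmeas).div
      ((measurable_const.mul hSmeas).add measurable_const)).const_add 1).log).div_const _
  have hbound : ∀ᵐ ω ∂μ, ‖Real.logb 2 (1 + γ ω)‖ ≤ Real.logb 2 (1 + 1/c) := by
    filter_upwards [hS0] with ω h
    rw [hγ ω]
    have hden : 0 < γSNR*c*S ω+1 := by positivity
    have h1 : 0 ≤ (γSNR * S ω)/(γSNR*c*S ω+1) :=
      div_nonneg (mul_nonneg hγSNR.le h) hden.le
    have h2 : (γSNR * S ω)/(γSNR*c*S ω+1) ≤ 1/c := by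
      rw [div_le_div_iff₀ hden hc]
      nlinarith
    have hge : 0 ≤ Real.logb 2 (1 + (γSNR * S ω)/(γSNR*c*S ω+1)) :=
      Real.logb_nonneg one_lt_two (by linarith)
    rw [Real.norm_eq_abs, abs_of_nonneg hge]
    exact Real.logb_le_logb_of_le one_lt_two (by linarith) (by linarith)
  have hint1 : Integrable (fun ω => Real.logb 2 (1 + γ ω)) μ :=
    (integrable_const _).mono' hγmeas.aestronglyMeasurable hbound
  have hintb : Integrable (fun ω => S ω - (N:ℝ)) μ := hSint.sub (integrable_const _)
  have hintc : Integrable (fun ω => C2 * (S ω - (N:ℝ))) μ := hintb.const_mul C2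
  have hint2 : Integrable (fun ω => C1 + C2*(S ω - N)) μ := (integrable_const C1).add hintc
  have hle := integral_mono_ae hint1 hint2 hptwise
  have hint2val : ∫ ω, (C1 + C2*(S ω - N)) ∂μ = C1 := by
    rw [integral_add (integrable_const _) hintc, integral_const, integral_const_mul _ _,
      integral_sub hSint (integrable_const _), integral_const, hSmean]
    simp
  rw [hint2val] at hle
  refine hle.trans_eq ?_
  rw [hC1]
  congr 1
  have hd2 : (0:ℝ) < (N:ℝ)*c + 1/γSNR := by positivity
  rw [hv]
  field_simp
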